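/- Let (A,m) be a catenary noetherian local ring and 𝔞 an ideal of A whose set of minimal primes is {𝔭_1,…,𝔭_t} with t ≥ 2. If the punctured spectrum of A/𝔞 is connected, then there exists an index i such that the punctured spectrum of A/𝔟_i is connected, where 𝔟_i = ⋂_{j≠i} 𝔭_j. -/

import Mathlib

open CategoryTheory IsLocalRing

/-- The punctured spectrum of a ring: the primes that are not maximal. For a local
ring `A` this is `Spec A ∖ {𝔪}`. -/
def puncturedSpectrum (A : Type) [CommRing A] : Set (PrimeSpectrum A) :=
  {p | ¬ p.asIdeal.IsMaximal}

/-- A noetherian local ring is regular if its maximal ideal is generated by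
`dim R` elements. -/
def IsRegularLocalRing' (R : Type) [CommRing R] [IsLocalRing R] : Prop :=
  IsNoetherianRing R ∧
    ∃ s : Finset R, Ideal.span (s : Set R) = maximalIdeal R ∧
      (s.card : WithBot ℕ∞) = ringKrullDim R

/-- `Hom_R(R/J, M)` is killed by `J`. -/
theorem homQuotientTorsion (R : Type) [CommRing R] (J : Ideal R)
    (M : Type) [AddCommGroup M] [Module R M] :
    Module.IsTorsionBySet R ((R ⧸ J) →ₗ[R] M) J := by
  intro f a
  refine LinearMap.ext fun x => ?_
  obtain ⟨r, rfl⟩ := Ideal.Quotient.mk_surjective x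
  have hx : (a : R) • (Ideal.Quotient.mk J r) = (0 : R ⧸ J) := by
    rw [Algebra.smul_def, Ideal.Quotient.algebraMap_eq,
      Ideal.Quotient.eq_zero_iff_mem.mpr a.2, zero_mul]
  rw [LinearMap.smul_apply, ← map_smul, hx, map_zero, LinearMap.zero_apply]

/-- `dim_{R/J} Hom_R(R/J, M)`, the dimension (as a vector space over `R/J` when `J` is
maximal) of the module of `R`-linear maps `R/J → M`. -/
noncomputable def homDim (R : Type) [CommRing R] (J : Ideal R)
    (M : Type) [AddCommGroup M] [Module R M] : Cardinal :=
  letI : Module (R ⧸ J) ((R ⧸ J) →ₗ[R] M) :=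
    Module.IsTorsionBySet.module (homQuotientTorsion R J M)
  Module.rank (R ⧸ J) ((R ⧸ J) →ₗ[R] M)

/-- The height of an ideal: the infimum of the heights of the primes containing it. -/
noncomputable def idealHeight {A : Type} [CommRing A] (J : Ideal A) : ℕ∞ :=
  ⨅ p ∈ {p : PrimeSpectrum A | J ≤ p.asIdeal}, Order.height p

/-- The Hochster–Huneke graph of a ring: vertices are the top-dimensional minimal
primes, and two distinct vertices `P`, `Q` are adjacent iff `height (P + Q) = 1`. -/
def hochsterHunekeGraph (A : Type) [CommRing A] :
    SimpleGraph {P : Ideal A // P ∈ minimalPrimes A ∧ ringKrullDim (A ⧸ P) = ringKrullDim A} where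
  Adj P Q := P ≠ Q ∧ idealHeight (P.1 ⊔ Q.1) = 1
  symm := ⟨fun P Q h => ⟨h.1.symm, by rw [sup_comm]; exact h.2⟩⟩
  loopless := ⟨fun P h => h.1 rfl⟩

/-- The local cohomological dimension of an ideal. -/
noncomputable def lcd (R : Type) [CommRing R] (I : Ideal R) : ℕ∞ :=
  sSup ((fun j : ℕ => (j : ℕ∞)) '' {j : ℕ | Nontrivial ((localCohomology I j).obj (ModuleCat.of R R))})

/-- The depth of a local ring: the least `j` with `Ext^j(k, A) ≠ 0`. -/
noncomputable def ringDepth (A : Type) [CommRing A] [IsLocalRing A] : ℕ∞ :=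
  sInf ((fun j : ℕ => (j : ℕ∞)) '' {j : ℕ | Nontrivial (((Ext A (ModuleCat A) j).obj
    (Opposite.op (ModuleCat.of A (ResidueField A)))).obj (ModuleCat.of A A))})

/-- Serre's condition `(S_i)`: `depth A_P ≥ min(i, dim A_P)` for all primes `P`. -/
def SerreCondition (A : Type) [CommRing A] (i : ℕ) : Prop :=
  ∀ P : PrimeSpectrum A,
    min (i : WithBot ℕ∞) (ringKrullDim (Localization.AtPrime P.asIdeal)) ≤
      (ringDepth (Localization.AtPrime P.asIdeal) : WithBot ℕ∞)

/-- A ring is catenary if any two saturated chains of primes with the same endpoints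
have the same length. -/
def IsCatenaryRing (A : Type) [CommRing A] : Prop :=
  ∀ c₁ c₂ : LTSeries (PrimeSpectrum A),
    c₁.head = c₂.head → c₁.last = c₂.last →
    (∀ i : Fin c₁.length, c₁.toFun i.castSucc ⋖ c₁.toFun i.succ) →
    (∀ i : Fin c₂.length, c₂.toFun i.castSucc ⋖ c₂.toFun i.succ) →
    c₁.length = c₂.length

/-- A local ring is equidimensional if `dim(A/P) = dim A` for every minimal prime `P`. -/
def EquidimensionalRing (A : Type) [CommRing A] : Prop :=
  ∀ P ∈ minimalPrimes A, ringKrullDim (A ⧸ P) = ringKrullDim A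


open Set in
/-- Transfer of connectedness of the punctured spectrum of `A ⧸ I` to the
corresponding subset of the spectrum of the local ring `A`. -/
lemma aux_conn_transfer {A : Type} [CommRing A] [IsLocalRing A] (I : Ideal A) (hI : I ≠ ⊤) :
    _root_.IsConnected (puncturedSpectrum (A ⧸ I)) ↔
      _root_.IsConnected (PrimeSpectrum.zeroLocus (I : Set A) ∩ puncturedSpectrum A) := by
  have hnt : Nontrivial (A ⧸ I) := Ideal.Quotient.nontrivial_iff.mpr hI
  have hloc : IsLocalRing (A ⧸ I) :=
    IsLocalRing.of_surjective' (Ideal.Quotient.mk I) Ideal.Quotient.mk_surjective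
  set f := PrimeSpectrum.comap (Ideal.Quotient.mk I) with hf
  have hemb : Topology.IsInducing f :=
    (PrimeSpectrum.isClosedEmbedding_comap_of_surjective _ _
      Ideal.Quotient.mk_surjective).toIsInducing
  have himg : f '' puncturedSpectrum (A ⧸ I) =
      PrimeSpectrum.zeroLocus (I : Set A) ∩ puncturedSpectrum A := by
    ext p
    constructor
    · rintro ⟨q, hq, rfl⟩
      refine ⟨?_, ?_⟩
      · intro x hx
        show x ∈ Ideal.comap (Ideal.Quotient.mk I) q.asIdeal
        rw [Ideal.mem_comap, Ideal.Quotient.eq_zero_iff_mem.mpr hx]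
        exact q.asIdeal.zero_mem
      · intro hmax
        apply hq
        have h1 : Ideal.comap (Ideal.Quotient.mk I) q.asIdeal = maximalIdeal A :=
          IsLocalRing.eq_maximalIdeal hmax
        have h2 : Ideal.comap (Ideal.Quotient.mk I) (maximalIdeal (A ⧸ I)) = maximalIdeal A :=
          IsLocalRing.eq_maximalIdeal
            (Ideal.comap_isMaximal_of_surjective _ Ideal.Quotient.mk_surjective)
        have h3 : q.asIdeal = maximalIdeal (A ⧸ I) :=
          Ideal.comap_injective_of_surjective _ Ideal.Quotient.mk_surjective (h1.trans h2.symm)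
        rw [h3]
        exact IsLocalRing.maximalIdeal.isMaximal _
    · rintro ⟨hzl, hmax⟩
      have hp : p ∈ Set.range f := by
        rw [hf, range_comap_of_surjective _ _ Ideal.Quotient.mk_surjective,
          Ideal.mk_ker]
        exact hzl
      obtain ⟨q, rfl⟩ := hp
      refine ⟨q, fun hq => hmax ?_, rfl⟩
      exact Ideal.comap_isMaximal_of_surjective (f := Ideal.Quotient.mk I)
        Ideal.Quotient.mk_surjective (H := hq)
  rw [← himg]
  constructor
  · intro h
    exact ⟨h.nonempty.image f, hemb.isPreconnected_image.mpr h.isPreconnected⟩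
  · intro h
    exact ⟨Set.image_nonempty.mp h.nonempty, hemb.isPreconnected_image.mp h.isPreconnected⟩

open Set in
/-- The key topological lemma: if a finite union of "relatively closed" connected
pieces is connected, one piece can be removed keeping the union connected. -/
lemma aux_topo_key {X : Type} [TopologicalSpace X] {t : ℕ} (ht : 2 ≤ t)
    (C : Fin t → Set X) (hC : ∀ j, IsClosed (C j)) (P : Set X)
    (hS : ∀ j, _root_.IsConnected (C j ∩ P))
    (hU : _root_.IsConnected ((⋃ j, C j) ∩ P)) :
    ∃ i : Fin t, _root_.IsConnected ((⋃ j ∈ ({i}ᶜ : Set (Fin t)), C j) ∩ P) := by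
  set S : Fin t → Set X := fun j => C j ∩ P with hSdef
  have hUeq : (⋃ j, C j) ∩ P = ⋃ j, S j := by rw [Set.iUnion_inter]
  rw [hUeq] at hU
  -- the intersection graph
  let G : SimpleGraph (Fin t) :=
    { Adj := fun j k => j ≠ k ∧ (S j ∩ S k).Nonempty
      symm := by
        constructor
        rintro j k ⟨h1, h2⟩
        exact ⟨h1.symm, by rwa [Set.inter_comm]⟩
      loopless := ⟨fun j h => h.1 rfl⟩ }
  have hSsubU : ∀ j, S j ⊆ ⋃ l, S l := fun j => Set.subset_iUnion S j
  -- the graph is connected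
  have hGconn : G.Connected := by
    rw [SimpleGraph.connected_iff]
    refine ⟨fun j k => ?_, ⟨⟨0, by omega⟩⟩⟩
    by_contra hreach
    set K : Set (Fin t) := {l | G.Reachable j l} with hK
    have hT1 : IsClosed (⋃ l ∈ K, C l) :=
      (Set.toFinite K).isClosed_biUnion fun l _ => hC l
    have hT2 : IsClosed (⋃ l ∈ Kᶜ, C l) :=
      (Set.toFinite Kᶜ).isClosed_biUnion fun l _ => hC l
    have hsub : (⋃ l, S l) ⊆ (⋃ l ∈ K, C l) ∪ (⋃ l ∈ Kᶜ, C l) := by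
      rintro x hx
      obtain ⟨l, hl⟩ := Set.mem_iUnion.mp hx
      by_cases hlK : l ∈ K
      · exact Or.inl (Set.mem_biUnion hlK hl.1)
      · exact Or.inr (Set.mem_biUnion hlK hl.1)
    have h1 : ((⋃ l, S l) ∩ ⋃ l ∈ K, C l).Nonempty := by
      obtain ⟨x, hx⟩ := (hS j).nonempty
      exact ⟨x, hSsubU j hx, Set.mem_biUnion (show j ∈ K from SimpleGraph.Reachable.refl j) hx.1⟩
    have h2 : ((⋃ l, S l) ∩ ⋃ l ∈ Kᶜ, C l).Nonempty := by
      obtain ⟨x, hx⟩ := (hS k).nonempty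
      exact ⟨x, hSsubU k hx, Set.mem_biUnion (show k ∈ Kᶜ from hreach) hx.1⟩
    obtain ⟨x, hxU, hx1, hx2⟩ :=
      isPreconnected_closed_iff.1 hU.isPreconnected _ _ hT1 hT2 hsub h1 h2
    obtain ⟨m, hm⟩ := Set.mem_iUnion.mp hxU
    obtain ⟨a, haK, hxa⟩ := Set.mem_iUnion₂.mp hx1
    obtain ⟨b, hbK, hxb⟩ := Set.mem_iUnion₂.mp hx2
    have hxSa : x ∈ S a := ⟨hxa, hm.2⟩
    have hxSb : x ∈ S b := ⟨hxb, hm.2⟩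
    have hab : a ≠ b := fun h => hbK (h ▸ haK)
    exact hbK (haK.trans (SimpleGraph.Adj.reachable ⟨hab, ⟨x, hxSa, hxSb⟩⟩))
  -- pick a vertex at maximal distance from a base vertex
  have h0t : 0 < t := by omega
  have h1t : 1 < t := by omega
  let v0 : Fin t := ⟨0, h0t⟩
  obtain ⟨i, -, hi⟩ := Finset.exists_max_image Finset.univ (G.dist v0) ⟨v0, Finset.mem_univ _⟩
  have hi' : ∀ u : Fin t, G.dist v0 u ≤ G.dist v0 i := fun u => hi u (Finset.mem_univ u)
  have hiv0 : i ≠ v0 := by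
    obtain ⟨u, hu⟩ := Fintype.exists_ne_of_one_lt_card (by simpa using h1t) v0
    have hpos : 0 < G.dist v0 u := hGconn.pos_dist_of_ne (Ne.symm hu)
    intro h
    have h2 := hi' u
    rw [h, SimpleGraph.dist_self] at h2
    omega
  -- walks from v0 avoiding i
  have hwalk : ∀ u : Fin t, u ≠ i → ∃ w : G.Walk v0 u, i ∉ w.support := by
    intro u hu
    obtain ⟨p, hp⟩ := hGconn.exists_walk_length_eq_dist v0 u
    by_cases hip : i ∈ p.support
    · exfalso
      have hsplit := p.take_spec hip
      have hlen : (p.takeUntil i hip).length + (p.dropUntil i hip).length = p.length := by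
        rw [← SimpleGraph.Walk.length_append, hsplit]
      have hd1 : G.dist v0 i ≤ (p.takeUntil i hip).length := SimpleGraph.dist_le _
      have hd2 : 1 ≤ (p.dropUntil i hip).length := by
        by_contra hcon
        push_neg at hcon
        interval_cases h : (p.dropUntil i hip).length
        exact hu ((p.dropUntil i hip).eq_of_length_eq_zero h).symm
      have := hi' u
      omega
    · exact ⟨p, hip⟩
  -- walks avoiding i give chains in the intersection relation
  have hrtg : ∀ {a b : Fin t} (w : G.Walk a b), i ∉ w.support →
      Relation.ReflTransGen
        (fun x y : Fin t => (S x ∩ S y).Nonempty ∧ x ∈ ({i}ᶜ : Set (Fin t))) a b := by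
    intro a b w
    induction w with
    | nil => intro _; exact Relation.ReflTransGen.refl
    | @cons a c b h p ih =>
      intro hsup
      rw [SimpleGraph.Walk.support_cons, List.mem_cons] at hsup
      push_neg at hsup
      exact Relation.ReflTransGen.head ⟨h.2, fun hc => hsup.1 (by simpa using hc.symm)⟩
        (ih hsup.2)
  refine ⟨i, ?_⟩
  have hfin : (⋃ j ∈ ({i}ᶜ : Set (Fin t)), C j) ∩ P = ⋃ j ∈ ({i}ᶜ : Set (Fin t)), S j := by
    rw [Set.iUnion₂_inter]
  rw [hfin]
  refine IsConnected.biUnion_of_reflTransGen ⟨v0, hiv0.symm⟩ (fun j _ => hS j) ?_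
  intro a ha b hb
  obtain ⟨wa, hwa⟩ := hwalk a (by simpa using ha)
  obtain ⟨wb, hwb⟩ := hwalk b (by simpa using hb)
  have hcomb : i ∉ (wa.reverse.append wb).support := by
    rw [SimpleGraph.Walk.mem_support_append_iff]
    push_neg
    constructor
    · rw [SimpleGraph.Walk.support_reverse, List.mem_reverse]; exact hwa
    · exact hwb
  exact hrtg (wa.reverse.append wb) hcomb

/-- **Proposition 3.1.** If the punctured spectrum of `A/𝔞` is connected, where
`𝔞` has minimal primes `𝔭_1, …, 𝔭_t` with `t ≥ 2`, then for some `i` the punctured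
spectrum of `A/𝔟_i` is connected, where `𝔟_i = ⋂_{j ≠ i} 𝔭_j`. -/
theorem connected_subgraph_reduction
    (A : Type) [CommRing A] [IsLocalRing A] [IsNoetherianRing A]
    (hcat : IsCatenaryRing A)
    (𝔞 : Ideal A) (t : ℕ) (ht : 2 ≤ t)
    (𝔭 : Fin t → Ideal A) (hinj : Function.Injective 𝔭)
    (hmin : 𝔞.minimalPrimes = Set.range 𝔭)
    (hconn : _root_.IsConnected (puncturedSpectrum (A ⧸ 𝔞))) :
    ∃ i : Fin t,
      _root_.IsConnected (puncturedSpectrum (A ⧸ (⨅ j ∈ ({i}ᶜ : Set (Fin t)), 𝔭 j))) := by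
  classical
  -- basic facts about the minimal primes
  have hmem : ∀ j, 𝔭 j ∈ 𝔞.minimalPrimes := fun j => hmin ▸ Set.mem_range_self j
  have hP : ∀ j, (𝔭 j).IsPrime := fun j => (hmem j).1.1
  have hle : ∀ j, 𝔞 ≤ 𝔭 j := fun j => (hmem j).1.2
  have h1t : 1 < t := by omega
  have hnm : ∀ j, ¬ (𝔭 j).IsMaximal := by
    intro j hj
    obtain ⟨k, hk⟩ := Fintype.exists_ne_of_one_lt_card (by simpa using h1t) j
    have hjm : 𝔭 j = maximalIdeal A := IsLocalRing.eq_maximalIdeal hj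
    have hkj : 𝔭 k ≤ 𝔭 j := hjm ▸ IsLocalRing.le_maximalIdeal (hP k).ne_top
    have := (hmem j).2 ⟨hP k, hle k⟩ hkj
    exact hk (hinj (le_antisymm hkj this))
  -- the punctured spectrum of A is open
  have hmaxset : {p : PrimeSpectrum A | p.asIdeal.IsMaximal} =
      {(⟨maximalIdeal A, (IsLocalRing.maximalIdeal.isMaximal A).isPrime⟩ : PrimeSpectrum A)} := by
    ext p
    constructor
    · intro hp
      exact PrimeSpectrum.ext (IsLocalRing.eq_maximalIdeal hp)
    · rintro rfl
      exact IsLocalRing.maximalIdeal.isMaximal A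
  have hopen : IsOpen (puncturedSpectrum A) := by
    have : puncturedSpectrum A = {p : PrimeSpectrum A | p.asIdeal.IsMaximal}ᶜ := rfl
    rw [this, hmaxset]
    exact (PrimeSpectrum.isClosed_singleton_iff_isMaximal _).mpr
      (IsLocalRing.maximalIdeal.isMaximal A) |>.isOpen_compl
  set C : Fin t → Set (PrimeSpectrum A) := fun j => PrimeSpectrum.zeroLocus (𝔭 j : Set A)
    with hC
  -- zero locus of 𝔞 is the union of the zero loci of the minimal primes
  have h𝔞 : PrimeSpectrum.zeroLocus (𝔞 : Set A) = ⋃ j, C j := by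
    ext p
    rw [PrimeSpectrum.mem_zeroLocus, Set.mem_iUnion]
    constructor
    · intro hp
      obtain ⟨q, hq, hq'⟩ := Ideal.exists_minimalPrimes_le (J := p.asIdeal)
        (SetLike.coe_subset_coe.mp hp)
      rw [hmin] at hq
      obtain ⟨j, rfl⟩ := hq
      exact ⟨j, hq'⟩
    · rintro ⟨j, hj⟩
      exact Set.Subset.trans (SetLike.coe_subset_coe.mpr (hle j)) hj
  -- zero locus of the intersection of all but one minimal prime
  have hbinf : ∀ i : Fin t, PrimeSpectrum.zeroLocus
      (((⨅ j ∈ ({i}ᶜ : Set (Fin t)), 𝔭 j) : Ideal A) : Set A) =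
      ⋃ j ∈ ({i}ᶜ : Set (Fin t)), C j := by
    intro i
    have hinf : (⨅ j ∈ ({i}ᶜ : Set (Fin t)), 𝔭 j) = ({i}ᶜ : Finset (Fin t)).inf 𝔭 := by
      rw [Finset.inf_eq_iInf]
      exact iInf_congr fun j => by simp
    ext p
    rw [Set.mem_iUnion₂, PrimeSpectrum.mem_zeroLocus, SetLike.coe_subset_coe, hinf,
      p.isPrime.inf_le']
    constructor
    · rintro ⟨j, hj, hj'⟩
      exact ⟨j, by simpa using hj,
        (PrimeSpectrum.mem_zeroLocus _ _).mpr (SetLike.coe_subset_coe.mpr hj')⟩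
    · rintro ⟨j, hj, hj'⟩
      exact ⟨j, by simpa using hj,
        SetLike.coe_subset_coe.mp ((PrimeSpectrum.mem_zeroLocus _ _).mp hj')⟩
  -- each piece is connected
  have hSconn : ∀ j, _root_.IsConnected (C j ∩ puncturedSpectrum A) := by
    intro j
    have hirr : IsIrreducible (C j) := by
      rw [hC]
      rw [PrimeSpectrum.isIrreducible_zeroLocus_iff, (hP j).radical]
      exact hP j
    constructor
    · exact ⟨⟨𝔭 j, hP j⟩, by simp [hC, PrimeSpectrum.mem_zeroLocus], hnm j⟩
    · rintro u v hu hv hcov ⟨x, hxS, hxu⟩ ⟨y, hyS, hyv⟩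
      obtain ⟨z, hzC, hz⟩ := hirr.2 (puncturedSpectrum A ∩ u) (puncturedSpectrum A ∩ v)
        (hopen.inter hu) (hopen.inter hv)
        ⟨x, hxS.1, hxS.2, hxu⟩ ⟨y, hyS.1, hyS.2, hyv⟩
      exact ⟨z, ⟨⟨hzC, hz.1.1⟩, hz.1.2, hz.2.2⟩⟩
  -- the whole punctured spectrum of A/𝔞 corresponds to the union
  have h𝔞top : 𝔞 ≠ ⊤ := fun h => (hP ⟨0, by omega⟩).ne_top (top_le_iff.mp (h ▸ hle ⟨0, by omega⟩))
  have hU : _root_.IsConnected ((⋃ j, C j) ∩ puncturedSpectrum A) := by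
    rw [← h𝔞]
    exact (aux_conn_transfer 𝔞 h𝔞top).mp hconn
  obtain ⟨i, hi⟩ := aux_topo_key ht C (fun j => PrimeSpectrum.isClosed_zeroLocus _)
    (puncturedSpectrum A) hSconn hU
  refine ⟨i, ?_⟩
  have hbtop : (⨅ j ∈ ({i}ᶜ : Set (Fin t)), 𝔭 j) ≠ ⊤ := by
    obtain ⟨k, hk⟩ := Fintype.exists_ne_of_one_lt_card (by simpa using h1t) i
    intro h
    have hle' : (⨅ j ∈ ({i}ᶜ : Set (Fin t)), 𝔭 j) ≤ 𝔭 k := biInf_le _ (by simpa using hk)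
    exact (hP k).ne_top (top_le_iff.mp (h ▸ hle'))
  rw [aux_conn_transfer _ hbtop, hbinf i]
  exact hi
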